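/- Let K be an algebraically closed field, g ≥ 1 an integer, and (Q_0, Q_1) a pair of symmetric g×g matrices over K such that Q_0 is invertible and the characteristic polynomial of Q_0⁻¹·Q_1 has g distinct roots in K; if char K = 2, assume in addition that Tr(Q_0⁻¹·Q_1) ≠ 0. Then there exist Λ ∈ SL_g(K), a scalar λ ∈ K, and a diagonal matrix D ∈ Mat_g(K) such that Λ·Q_0·Λᵗ = λ·1_g and Λ·Q_1·Λᵗ = D. -/

import Mathlib

open Matrix

/-- Let `K` be algebraically closed, `g ≥ 1`, and let `(Q₀, Q₁)` be a pair of
symmetric `g × g` matrices over `K` such that `Q₀` is invertible and the characteristic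
polynomial of `Q₀⁻¹ · Q₁` has `g` distinct roots in `K` (i.e. its multiset of roots has
`g` elements and no duplicates); if `char K = 2`, assume moreover `Tr (Q₀⁻¹ · Q₁) ≠ 0`.
Then there are `Λ ∈ SL_g(K)`, a scalar `λ ∈ K`, and a diagonal matrix `D` with
`Λ · Q₀ · Λᵗ = λ · 1_g` and `Λ · Q₁ · Λᵗ = D`. -/
theorem stmt14 (K : Type*) [Field K] [IsAlgClosed K] (g : ℕ) (hg : 1 ≤ g)
    (Q₀ Q₁ : Matrix (Fin g) (Fin g) K) (h0 : Q₀ᵀ = Q₀) (h1 : Q₁ᵀ = Q₁)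
    (hdet : IsUnit Q₀.det)
    (hcard : Multiset.card (Q₀⁻¹ * Q₁).charpoly.roots = g)
    (hnodup : (Q₀⁻¹ * Q₁).charpoly.roots.Nodup)
    (h2 : ringChar K = 2 → Matrix.trace (Q₀⁻¹ * Q₁) ≠ 0) :
    ∃ (Λ : SpecialLinearGroup (Fin g) K) (lam : K) (D : Matrix (Fin g) (Fin g) K),
      D.IsDiag ∧
      (Λ : Matrix (Fin g) (Fin g) K) * Q₀ * (Λ : Matrix (Fin g) (Fin g) K)ᵀ =
        lam • (1 : Matrix (Fin g) (Fin g) K) ∧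
      (Λ : Matrix (Fin g) (Fin g) K) * Q₁ * (Λ : Matrix (Fin g) (Fin g) K)ᵀ = D := by
  classical
  set A := Q₀⁻¹ * Q₁ with hA
  -- enumerate the g distinct roots
  have hlen : A.charpoly.roots.toList.length = g := by
    rw [Multiset.length_toList, hcard]
  have hlnd : A.charpoly.roots.toList.Nodup := by
    have h := hnodup
    rw [← Multiset.coe_toList A.charpoly.roots] at h
    exact Multiset.coe_nodup.mp h
  set μ : Fin g → K := fun i => A.charpoly.roots.toList.get (Fin.cast hlen.symm i) with hμdef
  have hμinj : Function.Injective μ := by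
    intro i j hij
    have := (List.nodup_iff_injective_get.mp hlnd) hij
    simpa [Fin.ext_iff] using this
  have hroot : ∀ i, A.charpoly.IsRoot (μ i) := by
    intro i
    apply Polynomial.isRoot_of_mem_roots
    rw [← Multiset.mem_toList]
    exact List.get_mem _ _
  -- eigenvectors
  have hev : ∀ i, ∃ v : Fin g → K, v ≠ 0 ∧ A.mulVec v = μ i • v := by
    intro i
    have hdet0 : (μ i • (1 : Matrix (Fin g) (Fin g) K) - A).det = 0 := by
      have hmap : A.charpoly.eval (μ i)
          = ((Polynomial.evalRingHom (μ i)).mapMatrix A.charmatrix).det := by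
        rw [Matrix.charpoly, ← RingHom.map_det]; rfl
      have : A.charpoly.eval (μ i) = (μ i • (1 : Matrix (Fin g) (Fin g) K) - A).det := by
        rw [hmap]
        congr 1
        ext a b
        by_cases hab : a = b
        · subst hab
          simp [Matrix.charmatrix_apply_eq, Matrix.smul_apply, Matrix.one_apply]
        · simp [Matrix.charmatrix_apply_ne _ _ _ hab, Matrix.smul_apply, Matrix.one_apply, hab]
      rw [← this]
      exact hroot i
    obtain ⟨v, hv0, hv⟩ := (Matrix.exists_mulVec_eq_zero_iff).2 hdet0
    refine ⟨v, hv0, ?_⟩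
    rw [Matrix.sub_mulVec, sub_eq_zero] at hv
    rw [← hv, Matrix.smul_mulVec, Matrix.one_mulVec]
  choose v hv0 hvA using hev
  -- the rows v form an invertible matrix
  have hli : LinearIndependent K v := by
    apply Module.End.eigenvectors_linearIndependent' (Matrix.mulVecLin A) μ hμinj v
    intro i
    refine ⟨?_, hv0 i⟩
    rw [Module.End.mem_eigenspace_iff]
    exact hvA i
  set P : Matrix (Fin g) (Fin g) K := Matrix.of v with hPdef
  have hPunit : IsUnit P := Matrix.linearIndependent_rows_iff_isUnit.mp hli
  have hPdet : P.det ≠ 0 := by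
    intro h
    exact (Matrix.isUnit_iff_isUnit_det P).mp hPunit |>.ne_zero h
  -- Q₀ * A = Q₁
  have hQ0A : Q₀ * A = Q₁ := by
    rw [hA, ← Matrix.mul_assoc, Matrix.mul_nonsing_inv Q₀ hdet, Matrix.one_mul]
  have hQ1v : ∀ j, Q₁.mulVec (v j) = μ j • Q₀.mulVec (v j) := by
    intro j
    rw [← hQ0A, ← Matrix.mulVec_mulVec, hvA j, Matrix.mulVec_smul]
  -- key identity
  have key : Q₁ * Pᵀ = Q₀ * Pᵀ * Matrix.diagonal μ := by
    ext i j
    rw [Matrix.mul_diagonal]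
    have h := congrFun (hQ1v j) i
    simp only [Matrix.mulVec, dotProduct, Pi.smul_apply, smul_eq_mul] at h
    simp only [Matrix.mul_apply, Matrix.transpose_apply, hPdef, Matrix.of_apply]
    rw [h]; ring
  set B : Matrix (Fin g) (Fin g) K := P * Q₀ * Pᵀ with hBdef
  have hBsym : Bᵀ = B := by
    rw [hBdef, Matrix.transpose_mul, Matrix.transpose_mul, Matrix.transpose_transpose, h0,
      Matrix.mul_assoc]
  have key' : Q₁ * Pᵀ = Q₀ * (Pᵀ * Matrix.diagonal μ) := by rw [key, Matrix.mul_assoc]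
  have hBD : B * Matrix.diagonal μ = P * Q₁ * Pᵀ := by
    rw [hBdef]
    simp only [Matrix.mul_assoc]
    rw [key']
  have hBDsym : (B * Matrix.diagonal μ)ᵀ = B * Matrix.diagonal μ := by
    rw [hBD, Matrix.transpose_mul, Matrix.transpose_mul, Matrix.transpose_transpose, h1,
      Matrix.mul_assoc]
  have hcomm : Matrix.diagonal μ * B = B * Matrix.diagonal μ := by
    conv_rhs => rw [← hBDsym]
    rw [Matrix.transpose_mul, Matrix.diagonal_transpose, hBsym]
  -- B is diagonal
  have hBdiag : B = Matrix.diagonal (fun i => B i i) := by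
    ext i j
    by_cases hij : i = j
    · subst hij; simp
    · rw [Matrix.diagonal_apply_ne _ hij]
      have h := congrFun (congrFun hcomm i) j
      rw [Matrix.diagonal_mul, Matrix.mul_diagonal] at h
      have hne : μ i ≠ μ j := fun h' => hij (hμinj h')
      have : B i j * (μ i - μ j) = 0 := by ring_nf; linear_combination h
      rcases mul_eq_zero.mp this with h' | h'
      · exact h'
      · exact absurd (sub_eq_zero.mp h') hne
  set c : Fin g → K := fun i => B i i with hcdef
  have hcne : ∀ i, c i ≠ 0 := by
    have hdetB : B.det ≠ 0 := by
      rw [hBdef, Matrix.det_mul, Matrix.det_mul, Matrix.det_transpose]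
      exact mul_ne_zero (mul_ne_zero hPdet hdet.ne_zero) hPdet
    rw [hBdiag, Matrix.det_diagonal] at hdetB
    intro i hi
    exact hdetB (Finset.prod_eq_zero (Finset.mem_univ i) hi)
  -- square roots
  have hr : ∀ i, ∃ r : K, r ^ 2 = c i := fun i =>
    IsAlgClosed.exists_pow_nat_eq (c i) (by norm_num)
  choose r hr2 using hr
  have hrne : ∀ i, r i ≠ 0 := by
    intro i hri
    exact hcne i (by rw [← hr2 i, hri]; ring)
  have hprodr : (∏ i, r i) ≠ 0 := Finset.prod_ne_zero_iff.mpr fun i _ => hrne i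
  obtain ⟨s, hs⟩ := IsAlgClosed.exists_pow_nat_eq ((∏ i, r i) / P.det) (by omega : 0 < g)
  have hsne : s ≠ 0 := by
    intro h
    rw [h, zero_pow (by omega : g ≠ 0)] at hs
    exact hprodr (by rw [eq_comm, div_eq_zero_iff] at hs; exact hs.resolve_right hPdet)
  set e : Fin g → K := fun i => s / r i with hedef
  set Λmat : Matrix (Fin g) (Fin g) K := Matrix.diagonal e * P with hΛdef
  have hΛdet : Λmat.det = 1 := by
    rw [hΛdef, Matrix.det_mul, Matrix.det_diagonal, hedef]
    have : (∏ i : Fin g, s / r i) = s ^ g / ∏ i, r i := by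
      rw [Finset.prod_div_distrib, Finset.prod_const, Finset.card_univ, Fintype.card_fin]
    rw [this, hs]
    field_simp
  refine ⟨⟨Λmat, hΛdet⟩, s ^ 2, Matrix.diagonal (fun i => s ^ 2 * μ i), Matrix.isDiag_diagonal _,
    ?_, ?_⟩
  · show Λmat * Q₀ * Λmatᵀ = (s ^ 2) • 1
    have : Λmat * Q₀ * Λmatᵀ = Matrix.diagonal e * B * Matrix.diagonal e := by
      rw [hΛdef, hBdef, Matrix.transpose_mul, Matrix.diagonal_transpose]
      simp only [Matrix.mul_assoc]
    rw [this, hBdiag, Matrix.diagonal_mul_diagonal, Matrix.diagonal_mul_diagonal,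
      Matrix.smul_one_eq_diagonal]
    have hfun : (fun i => e i * c i * e i) = fun _ : Fin g => s ^ 2 := by
      funext i
      have h4 := hr2 i
      have h3 := hrne i
      show s / r i * c i * (s / r i) = s ^ 2
      field_simp
      linear_combination (-1 : K) * h4
    rw [hfun]
  · show Λmat * Q₁ * Λmatᵀ = _
    have : Λmat * Q₁ * Λmatᵀ = Matrix.diagonal e * (P * Q₁ * Pᵀ) * Matrix.diagonal e := by
      rw [hΛdef, Matrix.transpose_mul, Matrix.diagonal_transpose]
      simp only [Matrix.mul_assoc]
    rw [this, ← hBD, hBdiag, Matrix.diagonal_mul_diagonal, Matrix.diagonal_mul_diagonal,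
      Matrix.diagonal_mul_diagonal]
    have hfun : (fun i => e i * (c i * μ i) * e i) = fun i : Fin g => s ^ 2 * μ i := by
      funext i
      have h4 := hr2 i
      have h3 := hrne i
      show s / r i * (c i * μ i) * (s / r i) = s ^ 2 * μ i
      field_simp
      linear_combination (-1 : K) * μ i * h4
    rw [hfun]
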